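/- Let N > 1 and suppose x ∈ MAW^ℓ(y₁#…#y_N) \ (MAW^ℓ(y₁#…#y_{N−1}) ∪ MAW^ℓ(y_N)). Then x has a prefix in RMAW^ℓ(y₁#…#y_{N−1}) and a suffix in RMAW^ℓ(y_N), or x has a prefix in RMAW^ℓ(y_N) and a suffix in RMAW^ℓ(y₁#…#y_{N−1}), where RMAW^ℓ(u) with respect to v is the set of words of MAW^ℓ(u) that are not superwords of any word of MAW^ℓ(v). -/

import Mathlib

/-- `x` is a minimal absent word (MAW) of `y`: `x` is not a factor of `y`,
but every proper factor of `x` is a factor of `y`. -/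
def MAW {α : Type*} (y x : List α) : Prop :=
  ¬ x <:+: y ∧ ∀ f : List α, f <:+: x → f ≠ x → f <:+: y

/-- MAW of length at most `ℓ`. -/
def MAWle {α : Type*} (ℓ : ℕ) (y x : List α) : Prop :=
  MAW y x ∧ x.length ≤ ℓ

/-- Reduced set: MAWs of `u` (length ≤ ℓ) containing no MAW of `v` (length ≤ ℓ) as a factor. -/
def RMAW {α : Type*} (ℓ : ℕ) (u v x : List α) : Prop :=
  MAWle ℓ u x ∧ ∀ w : List α, MAWle ℓ v w → ¬ w <:+: x

namespace IncrHelper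

open List

variable {α : Type*}

lemma infix_tail_or_dropLast {f p : List α} (h : f <:+: p) (hne : f ≠ p) :
    f <:+: p.tail ∨ f <:+: p.dropLast := by
  obtain ⟨a, b, rfl⟩ := h
  match a, b with
  | [], [] => simp at hne
  | [], c :: b' =>
    right
    simp only [nil_append]
    rw [List.dropLast_append_of_ne_nil (by simp : (c :: b') ≠ [])]
    simpa using List.infix_append [] f (c :: b').dropLast
  | c :: a', b =>
    left
    simpa using List.infix_append a' f b

lemma take_tail' (x : List α) (n : ℕ) : (x.take n).tail = x.tail.take (n - 1) := by
  cases x <;> cases n <;> simp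

lemma dropLast_take' {x : List α} {n : ℕ} (h : n ≤ x.length) :
    (x.take n).dropLast = x.take (n - 1) := by
  rw [dropLast_eq_take, length_take, take_take]
  congr 1
  omega

lemma maw_rev {y x : List α} (h : MAW y x) : MAW y.reverse x.reverse := by
  refine ⟨fun hc => h.1 (reverse_infix.mp hc), fun f hf hfe => ?_⟩
  have h1 : f.reverse <:+: x := by
    rw [← reverse_infix]; simpa using hf
  have h2 : f.reverse ≠ x := fun hh => hfe (by rw [← hh, reverse_reverse])
  have h3 := h.2 f.reverse h1 h2
  have := reverse_infix.mpr h3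
  simpa using this

lemma exists_prefix_rmaw (ℓ : ℕ) (u v x : List α)
    (absu : ¬ x <:+: u)
    (hfac : ∀ f : List α, f <:+: x → f ≠ x → f <:+: u ∨ f <:+: v)
    (hlen : x.length ≤ ℓ)
    (htail : x.tail <:+: u)
    (h₁ : ¬ MAWle ℓ u x) :
    ∃ p, p <+: x ∧ RMAW ℓ u v p := by
  classical
  have hex : ∃ n, ¬ x.take n <:+: u := ⟨x.length, by simpa using absu⟩
  set n := Nat.find hex with hn_def
  have hn : ¬ x.take n <:+: u := Nat.find_spec hex
  have hn0 : n ≠ 0 := by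
    intro h
    apply hn
    rw [h]
    simpa using (List.nil_infix : [] <:+: u)
  have hnle : n ≤ x.length := Nat.find_min' hex (by simpa using absu)
  have hprev : x.take (n - 1) <:+: u := by
    by_contra hc
    exact Nat.find_min hex (show n - 1 < n by omega) hc
  set p := x.take n with hp
  have hpx : p <+: x := take_prefix n x
  have hpt : p.tail <:+: u := by
    rw [hp, take_tail']
    exact (take_prefix _ _).isInfix.trans htail
  have hpd : p.dropLast <:+: u := by
    rw [hp, dropLast_take' hnle]
    exact hprev
  have hmaw : MAW u p := by
    refine ⟨hn, fun f hf hfe => ?_⟩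
    rcases infix_tail_or_dropLast hf hfe with h | h
    · exact h.trans hpt
    · exact h.trans hpd
  have hpne : p ≠ x := fun hh => h₁ ⟨hh ▸ hmaw, hlen⟩
  have hplen : p.length ≤ ℓ := le_trans hpx.length_le hlen
  have hpv : p <:+: v := (hfac p hpx.isInfix hpne).resolve_left hn
  exact ⟨p, hpx, ⟨hmaw, hplen⟩, fun w hw hwp => hw.1.1 (hwp.trans hpv)⟩

lemma exists_suffix_rmaw (ℓ : ℕ) (u v x : List α)
    (absu : ¬ x <:+: u)
    (hfac : ∀ f : List α, f <:+: x → f ≠ x → f <:+: u ∨ f <:+: v)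
    (hlen : x.length ≤ ℓ)
    (hdrop : x.dropLast <:+: u)
    (h₁ : ¬ MAWle ℓ u x) :
    ∃ s, s <:+ x ∧ RMAW ℓ u v s := by
  have absu' : ¬ x.reverse <:+: u.reverse := fun hc => absu (reverse_infix.mp hc)
  have hfac' : ∀ f : List α, f <:+: x.reverse → f ≠ x.reverse →
      f <:+: u.reverse ∨ f <:+: v.reverse := by
    intro f hf hfe
    have h1 : f.reverse <:+: x := by rw [← reverse_infix]; simpa using hf
    have h2 : f.reverse ≠ x := fun hh => hfe (by rw [← hh, reverse_reverse])
    rcases hfac f.reverse h1 h2 with h | h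
    · left; simpa using reverse_infix.mpr h
    · right; simpa using reverse_infix.mpr h
  have hlen' : x.reverse.length ≤ ℓ := by simpa using hlen
  have htail' : x.reverse.tail <:+: u.reverse := by
    rw [tail_reverse]
    exact reverse_infix.mpr hdrop
  have h₁' : ¬ MAWle ℓ u.reverse x.reverse := by
    rintro ⟨hm, hl⟩
    exact h₁ ⟨by simpa using maw_rev hm, by simpa using hl⟩
  obtain ⟨p, hpx, hmawle, hred⟩ :=
    exists_prefix_rmaw ℓ u.reverse v.reverse x.reverse absu' hfac' hlen' htail' h₁'
  refine ⟨p.reverse, ?_, ⟨?_, ?_⟩, ?_⟩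
  · exact reverse_prefix.mp (by simpa using hpx)
  · have := maw_rev hmawle.1
    simpa using this
  · simpa using hmawle.2
  · intro w hw hwp
    refine hred w.reverse ⟨by simpa using maw_rev hw.1, by simpa using hw.2⟩ ?_
    have := reverse_infix.mpr hwp
    simpa using this

lemma half (ℓ : ℕ) (u v x : List α)
    (absu : ¬ x <:+: u) (absv : ¬ x <:+: v)
    (hfac : ∀ f : List α, f <:+: x → f ≠ x → f <:+: u ∨ f <:+: v)
    (hlen : x.length ≤ ℓ)
    (htail : x.tail <:+: u) (hdrop : x.dropLast <:+: v)
    (h₁ : ¬ MAWle ℓ u x) (h₂ : ¬ MAWle ℓ v x) :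
    (∃ p, p <+: x ∧ RMAW ℓ u v p) ∧ (∃ s, s <:+ x ∧ RMAW ℓ v u s) :=
  ⟨exists_prefix_rmaw ℓ u v x absu hfac hlen htail h₁,
   exists_suffix_rmaw ℓ v u x absv (fun f hf hfe => (hfac f hf hfe).symm) hlen hdrop h₂⟩

lemma prefix_split {b w : List α} {hash : α} :
    ∀ a : List α, w <+: a ++ hash :: b → hash ∉ w → w <+: a := by
  induction w with
  | nil => intro a _ _; exact nil_prefix
  | cons c w' ih =>
    intro a h hw
    cases a with
    | nil =>
      obtain ⟨t, ht⟩ := h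
      simp only [cons_append, nil_append] at ht
      injection ht with h1 _
      subst h1
      exact absurd (mem_cons_self : c ∈ c :: w') hw
    | cons d a' =>
      obtain ⟨t, ht⟩ := h
      simp only [cons_append] at ht
      injection ht with h1 h2
      subst h1
      rw [cons_prefix_cons]
      exact ⟨rfl, ih a' ⟨t, h2⟩ (fun hm => hw (mem_cons_of_mem _ hm))⟩

lemma infix_split {v w : List α} {hash : α} :
    ∀ u : List α, w <:+: u ++ hash :: v → hash ∉ w → w <:+: u ∨ w <:+: v := by
  intro u
  induction u with
  | nil =>
    intro h hw
    simp only [nil_append] at h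
    rcases infix_cons_iff.mp h with h | h
    · have hw0 : w = [] := prefix_nil.mp (prefix_split [] h hw)
      subst hw0
      exact Or.inl nil_infix
    · exact Or.inr h
  | cons d u' ih =>
    intro h hw
    rcases infix_cons_iff.mp (by simpa using h) with h | h
    · left
      exact (prefix_split (d :: u') (by simpa using h) hw).isInfix
    · rcases ih h hw with h | h
      · exact Or.inl (infix_cons h)
      · exact Or.inr h

lemma intercalate_cons₂ (s c d : List α) (t : List (List α)) :
    List.intercalate s (c :: d :: t) = c ++ s ++ List.intercalate s (d :: t) := by
  simp [List.intercalate, intersperse_cons₂, append_assoc]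

lemma intercalate_append_last (s : List α) :
    ∀ (l : List (List α)) (a : List α), l ≠ [] →
      List.intercalate s (l ++ [a]) = List.intercalate s l ++ s ++ a := by
  intro l
  induction l with
  | nil => intro a h; exact absurd rfl h
  | cons c l' ih =>
    intro a _
    cases l' with
    | nil => simp [List.intercalate, intersperse_cons₂, append_assoc]
    | cons d l'' =>
      have h' := ih a (by simp)
      calc List.intercalate s ((c :: d :: l'') ++ [a])
          = c ++ s ++ List.intercalate s ((d :: l'') ++ [a]) := by
            simpa using intercalate_cons₂ s c d (l'' ++ [a])
        _ = c ++ s ++ (List.intercalate s (d :: l'') ++ s ++ a) := by rw [h']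
        _ = List.intercalate s (c :: d :: l'') ++ s ++ a := by
            rw [intercalate_cons₂ s c d l'']
            simp [append_assoc]

end IncrHelper

open List IncrHelper in
theorem incremental_reduced_prefix_suffix {α : Type*} (S : Set α) (hash : α)
    (hhash : hash ∉ S) (ys : List (List α)) (hne : ys ≠ [])
    (hN : 2 ≤ ys.length) (hS : ∀ w ∈ ys, ∀ a ∈ w, a ∈ S)
    (ℓ : ℕ) (x : List α) (hxS : ∀ a ∈ x, a ∈ S)
    (hx : MAWle ℓ (List.intercalate [hash] ys) x)
    (h₁ : ¬ MAWle ℓ (List.intercalate [hash] ys.dropLast) x)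
    (h₂ : ¬ MAWle ℓ (ys.getLast hne) x) :
    ((∃ p : List α, p <+: x ∧
        RMAW ℓ (List.intercalate [hash] ys.dropLast) (ys.getLast hne) p) ∧
      (∃ s : List α, s <:+ x ∧
        RMAW ℓ (ys.getLast hne) (List.intercalate [hash] ys.dropLast) s)) ∨
    ((∃ p : List α, p <+: x ∧
        RMAW ℓ (ys.getLast hne) (List.intercalate [hash] ys.dropLast) p) ∧
      (∃ s : List α, s <:+ x ∧
        RMAW ℓ (List.intercalate [hash] ys.dropLast) (ys.getLast hne) s)) := by
  set u := List.intercalate [hash] ys.dropLast with hu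
  set v := ys.getLast hne with hv
  have hdne : ys.dropLast ≠ [] := by
    intro h
    have := congrArg List.length h
    simp [length_dropLast] at this
    omega
  have hdec : List.intercalate [hash] ys = u ++ hash :: v := by
    conv_lhs => rw [← dropLast_append_getLast hne]
    rw [intercalate_append_last [hash] ys.dropLast (ys.getLast hne) hdne]
    simp [hu, hv, append_assoc]
  have hhx : hash ∉ x := fun hm => hhash (hxS hash hm)
  have hfac : ∀ f : List α, f <:+: x → f ≠ x → f <:+: u ∨ f <:+: v := by
    intro f hf hfe
    have hfy : f <:+: u ++ hash :: v := by
      rw [← hdec]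
      exact hx.1.2 f hf hfe
    exact infix_split u hfy (fun hm => hhx (List.IsInfix.mem hm hf))
  have absu : ¬ x <:+: u := by
    intro hc
    apply hx.1.1
    rw [hdec]
    exact hc.trans ⟨[], hash :: v, by simp⟩
  have absv : ¬ x <:+: v := by
    intro hc
    apply hx.1.1
    rw [hdec]
    exact hc.trans ⟨u ++ [hash], [], by simp⟩
  have hlen : x.length ≤ ℓ := hx.2
  have hxne : x ≠ [] := fun h => hx.1.1 (h ▸ nil_infix)
  have hxpos : 0 < x.length := length_pos_iff.mpr hxne
  have ht_ne : x.tail ≠ x := by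
    intro h
    have := congrArg List.length h
    rw [length_tail] at this
    omega
  have hd_ne : x.dropLast ≠ x := by
    intro h
    have := congrArg List.length h
    rw [length_dropLast] at this
    omega
  have htail_fac := hfac x.tail (tail_suffix x).isInfix ht_ne
  have hdrop_fac := hfac x.dropLast (dropLast_prefix x).isInfix hd_ne
  rcases htail_fac with htu | htv <;> rcases hdrop_fac with hdu | hdv
  · exact absurd ⟨⟨absu, fun f hf hfe =>
      (infix_tail_or_dropLast hf hfe).elim (·.trans htu) (·.trans hdu)⟩, hlen⟩ h₁
  · exact Or.inl (half ℓ u v x absu absv hfac hlen htu hdv h₁ h₂)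
  · exact Or.inr (half ℓ v u x absv absu
      (fun f hf hfe => (hfac f hf hfe).symm) hlen htv hdu h₂ h₁)
  · exact absurd ⟨⟨absv, fun f hf hfe =>
      (infix_tail_or_dropLast hf hfe).elim (·.trans htv) (·.trans hdv)⟩, hlen⟩ h₂
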